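/- Let H be a finite-dimensional Hopf algebra over a field k with basis {e_i} and dual basis {e^i}. In the Heisenberg double H(H*) = H* # H (smash product with multiplication (ξ # a)(ν # b) = ξ ∗ (a₁ ⇀ ν) # a₂ b), the canonical element W = Σ_i (ε # e_i) ⊗ (e^i # 1) satisfies the pentagon equation W₁₂ W₁₃ W₂₃ = W₂₃ W₁₂ in (H* # H)^⊗3. -/

import Mathlib

open TensorProduct

noncomputable section

variable (k H : Type*) [CommRing k] [Ring H] [HopfAlgebra k H]

/-- The right action of `H` on `H*`: `(a ⇀ ν)(b) = ν(ba)`, as a bilinear map. -/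
def rActL : H →ₗ[k] Module.Dual k H →ₗ[k] Module.Dual k H :=
  LinearMap.mk₂ k (fun a ν => ν ∘ₗ LinearMap.mulRight k a)
    (fun a a' ν => by ext b; simp [mul_add])
    (fun c a ν => by ext b; simp [mul_smul_comm])
    (fun a ν ν' => by ext b; simp)
    (fun c a ν => by ext b; simp)

/-- `H ⊗ H* → H*`, `a ⊗ ν ↦ (a ⇀ ν)`. -/
def rActT : H ⊗[k] Module.Dual k H →ₗ[k] Module.Dual k H :=
  TensorProduct.lift (rActL k H)

/-- The convolution product on `H*`: `(ξ ∗ ν)(h) = Σ ξ(h₁)ν(h₂)`, as a bilinear map. -/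
def convL : Module.Dual k H →ₗ[k] Module.Dual k H →ₗ[k] Module.Dual k H :=
  LinearMap.mk₂ k
    (fun ξ ν => LinearMap.mul' k k ∘ₗ TensorProduct.map ξ ν ∘ₗ Coalgebra.comul)
    (fun ξ ξ' ν => by
      simp [TensorProduct.map_add_left, LinearMap.comp_add, LinearMap.add_comp])
    (fun c ξ ν => by
      simp [TensorProduct.map_smul_left, LinearMap.comp_smul, LinearMap.smul_comp])
    (fun ξ ν ν' => by
      simp [TensorProduct.map_add_right, LinearMap.comp_add, LinearMap.add_comp])
    (fun c ξ ν => by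
      simp [TensorProduct.map_smul_right, LinearMap.comp_smul, LinearMap.smul_comp])

/-- `H* ⊗ H* → H*`, convolution. -/
def convT : Module.Dual k H ⊗[k] Module.Dual k H →ₗ[k] Module.Dual k H :=
  TensorProduct.lift (convL k H)

/-- The underlying space of the Heisenberg double `H(H*) = H* # H`. -/
abbrev HD := Module.Dual k H ⊗[k] H

/-- The multiplication `(ξ # a)(ν # b) = Σ ξ ∗ (a₁ ⇀ ν) # a₂b` of the Heisenberg
double `H(H*)`, as a linear map on the tensor square. -/
def hmulT : HD k H ⊗[k] HD k H →ₗ[k] HD k H :=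
  TensorProduct.map (convT k H) LinearMap.id
    ∘ₗ (TensorProduct.assoc k (Module.Dual k H) (Module.Dual k H) H).symm.toLinearMap
    ∘ₗ TensorProduct.map LinearMap.id (TensorProduct.map (rActT k H) LinearMap.id)
    ∘ₗ TensorProduct.map LinearMap.id
        (TensorProduct.assoc k H (Module.Dual k H) H).symm.toLinearMap
    ∘ₗ (TensorProduct.assoc k (Module.Dual k H) H (Module.Dual k H ⊗[k] H)).toLinearMap
    ∘ₗ (TensorProduct.tensorTensorTensorComm k (Module.Dual k H) (Module.Dual k H) H H).toLinearMap
    ∘ₗ TensorProduct.map LinearMap.id (TensorProduct.map LinearMap.id (LinearMap.mul' k H))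
    ∘ₗ TensorProduct.map LinearMap.id (TensorProduct.assoc k H H H).toLinearMap
    ∘ₗ TensorProduct.map LinearMap.id (TensorProduct.map Coalgebra.comul LinearMap.id)
    ∘ₗ (TensorProduct.tensorTensorTensorComm k (Module.Dual k H) H (Module.Dual k H) H).toLinearMap

/-- The product of two elements of the Heisenberg double `H(H*)`. -/
def hmul (x y : HD k H) : HD k H := hmulT k H (x ⊗ₜ y)

/-- The unit `ε # 1` of the Heisenberg double. -/
def hone : HD k H := (Coalgebra.counit : Module.Dual k H) ⊗ₜ (1 : H)

/-- Componentwise multiplication on `H(H*) ⊗ H(H*)`. -/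
def hmul2T : (HD k H ⊗[k] HD k H) ⊗[k] (HD k H ⊗[k] HD k H) →ₗ[k] HD k H ⊗[k] HD k H :=
  TensorProduct.map (hmulT k H) (hmulT k H)
    ∘ₗ (TensorProduct.tensorTensorTensorComm k (HD k H) (HD k H) (HD k H) (HD k H)).toLinearMap

def hmul2 (x y : HD k H ⊗[k] HD k H) : HD k H ⊗[k] HD k H := hmul2T k H (x ⊗ₜ y)

/-- Componentwise multiplication on `H(H*) ⊗ H(H*) ⊗ H(H*)`. -/
def hmul3T :
    (HD k H ⊗[k] (HD k H ⊗[k] HD k H)) ⊗[k] (HD k H ⊗[k] (HD k H ⊗[k] HD k H)) →ₗ[k]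
      HD k H ⊗[k] (HD k H ⊗[k] HD k H) :=
  TensorProduct.map (hmulT k H) (hmul2T k H)
    ∘ₗ (TensorProduct.tensorTensorTensorComm k (HD k H) (HD k H ⊗[k] HD k H)
          (HD k H) (HD k H ⊗[k] HD k H)).toLinearMap

def hmul3 (x y : HD k H ⊗[k] (HD k H ⊗[k] HD k H)) :
    HD k H ⊗[k] (HD k H ⊗[k] HD k H) := hmul3T k H (x ⊗ₜ y)

/-- The embedding of `H(H*)⊗²` in legs 1,2 of the triple tensor power. -/
def leg12 : HD k H ⊗[k] HD k H →ₗ[k] HD k H ⊗[k] (HD k H ⊗[k] HD k H) :=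
  TensorProduct.map LinearMap.id
    ((TensorProduct.mk k (HD k H) (HD k H)).flip (hone k H))

/-- The embedding of `H(H*)⊗²` in legs 1,3 of the triple tensor power. -/
def leg13 : HD k H ⊗[k] HD k H →ₗ[k] HD k H ⊗[k] (HD k H ⊗[k] HD k H) :=
  TensorProduct.map LinearMap.id (TensorProduct.mk k (HD k H) (HD k H) (hone k H))

/-- The embedding of `H(H*)⊗²` in legs 2,3 of the triple tensor power. -/
def leg23 : HD k H ⊗[k] HD k H →ₗ[k] HD k H ⊗[k] (HD k H ⊗[k] HD k H) :=
  TensorProduct.mk k (HD k H) (HD k H ⊗[k] HD k H) (hone k H)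

/-- The canonical element `W = Σ_i (ε # e_i) ⊗ (e^i # 1)`. -/
def canW {I : Type*} [Fintype I] (B : Module.Basis I k H) : HD k H ⊗[k] HD k H :=
  ∑ i : I, ((Coalgebra.counit : Module.Dual k H) ⊗ₜ B i) ⊗ₜ ((B.coord i) ⊗ₜ (1 : H))

end


set_option synthInstance.maxHeartbeats 1000000
set_option maxHeartbeats 1000000

section
variable {k H : Type*} [CommRing k] [Ring H] [HopfAlgebra k H]

lemma hmul_tmul (ξ ν : Module.Dual k H) (a b : H) :
    hmul k H (ξ ⊗ₜ a) (ν ⊗ₜ b)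
      = TensorProduct.map ((convL k H ξ) ∘ₗ ((rActL k H).flip ν))
          (LinearMap.mulRight k b) (Coalgebra.comul a) := by
  rw [hmul, hmulT]
  simp only [LinearMap.coe_comp, Function.comp_apply, LinearEquiv.coe_coe,
    tensorTensorTensorComm_tmul, map_tmul, LinearMap.id_coe, id_eq]
  generalize (Coalgebra.comul (R := k) a) = c
  induction c using TensorProduct.induction_on with
  | zero => simp
  | tmul x y =>
      simp [tensorTensorTensorComm_tmul, map_tmul, assoc_tmul, assoc_symm_tmul,
        rActT, convT, lift.tmul, LinearMap.mul'_apply, convL, rActL]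
  | add u v hu hv =>
      simp only [add_tmul, tmul_add, map_add, hu, hv]

lemma convL_counit_left (ν : Module.Dual k H) :
    convL k H (Coalgebra.counit : Module.Dual k H) ν = ν := by
  ext h
  simp only [convL, LinearMap.mk₂_apply, LinearMap.coe_comp, Function.comp_apply]
  rw [← LinearMap.lTensor_comp_rTensor, LinearMap.comp_apply,
    Coalgebra.rTensor_counit_comul, LinearMap.lTensor_tmul]
  simp

lemma convL_counit_right (ξ : Module.Dual k H) :
    convL k H ξ (Coalgebra.counit : Module.Dual k H) = ξ := by
  ext h
  simp only [convL, LinearMap.mk₂_apply, LinearMap.coe_comp, Function.comp_apply]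
  rw [← LinearMap.rTensor_comp_lTensor, LinearMap.comp_apply,
    Coalgebra.lTensor_counit_comul, LinearMap.rTensor_tmul]
  simp

lemma rActL_one (ν : Module.Dual k H) : rActL k H (1 : H) ν = ν := by
  ext b; simp [rActL]

lemma rActL_counit (a : H) :
    rActL k H a (Coalgebra.counit : Module.Dual k H)
      = Coalgebra.counit (R := k) a • (Coalgebra.counit : Module.Dual k H) := by
  ext b; simp [rActL, mul_comm]

lemma map_counit_fst {V : Type*} [AddCommGroup V] [Module k V] (g : H →ₗ[k] V) (a : H) :
    TensorProduct.map (Coalgebra.counit : H →ₗ[k] k) g (Coalgebra.comul a)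
      = (1 : k) ⊗ₜ g a := by
  rw [← LinearMap.lTensor_comp_rTensor, LinearMap.comp_apply,
    Coalgebra.rTensor_counit_comul, LinearMap.lTensor_tmul]

lemma map_smulRight_counit {V W : Type*} [AddCommGroup V] [Module k V]
    [AddCommGroup W] [Module k W] (v : V) (g : H →ₗ[k] W) (a : H) :
    TensorProduct.map ((Coalgebra.counit : H →ₗ[k] k).smulRight v) g (Coalgebra.comul a)
      = v ⊗ₜ g a := by
  have h : (Coalgebra.counit : H →ₗ[k] k).smulRight v
      = (LinearMap.toSpanSingleton k V v) ∘ₗ (Coalgebra.counit : H →ₗ[k] k) := by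
    ext x; simp [LinearMap.toSpanSingleton_apply]
  rw [h, ← LinearMap.id_comp g, TensorProduct.map_comp, LinearMap.comp_apply,
      map_counit_fst, map_tmul]
  simp [LinearMap.toSpanSingleton_apply]

lemma hmul_counit_counit (a b : H) :
    hmul k H ((Coalgebra.counit : Module.Dual k H) ⊗ₜ a)
        ((Coalgebra.counit : Module.Dual k H) ⊗ₜ b)
      = (Coalgebra.counit : Module.Dual k H) ⊗ₜ (a * b) := by
  rw [hmul_tmul]
  have h : (convL k H (Coalgebra.counit : Module.Dual k H)) ∘ₗ
      ((rActL k H).flip (Coalgebra.counit : Module.Dual k H))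
      = (Coalgebra.counit : H →ₗ[k] k).smulRight (Coalgebra.counit : Module.Dual k H) := by
    refine LinearMap.ext fun a' => ?_
    rw [LinearMap.comp_apply, LinearMap.flip_apply, rActL_counit, map_smul,
      convL_counit_left, LinearMap.smulRight_apply]
  rw [h, map_smulRight_counit, LinearMap.mulRight_apply]

lemma hmul_one_left (ξ ν : Module.Dual k H) (b : H) :
    hmul k H (ξ ⊗ₜ (1 : H)) (ν ⊗ₜ b) = (convL k H ξ ν) ⊗ₜ b := by
  rw [hmul_tmul, Bialgebra.comul_one, Algebra.TensorProduct.one_def, map_tmul]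
  simp [rActL_one, LinearMap.flip_apply]

lemma hmul_counit_one (ν : Module.Dual k H) (a : H) :
    hmul k H ((Coalgebra.counit : Module.Dual k H) ⊗ₜ a) (ν ⊗ₜ (1 : H))
      = TensorProduct.map ((rActL k H).flip ν) LinearMap.id (Coalgebra.comul a) := by
  rw [hmul_tmul, LinearMap.mulRight_one]
  have h : (convL k H (Coalgebra.counit : Module.Dual k H)) ∘ₗ ((rActL k H).flip ν)
      = (rActL k H).flip ν := by
    refine LinearMap.ext fun a' => ?_
    rw [LinearMap.comp_apply, convL_counit_left]
  rw [h]


variable {I : Type*} [Fintype I] (B : Module.Basis I k H)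

lemma sum3_rotate {M α β γ : Type*} [AddCommMonoid M] [Fintype α] [Fintype β] [Fintype γ]
    (f : α → β → γ → M) :
    ∑ a : α, ∑ b : β, ∑ c : γ, f a b c = ∑ c : γ, ∑ a : α, ∑ b : β, f a b c := by
  have h1 : ∀ a : α, ∑ b : β, ∑ c : γ, f a b c = ∑ c : γ, ∑ b : β, f a b c :=
    fun a => Finset.sum_comm
  simp_rw [h1]
  exact Finset.sum_comm

lemma dual_expand (ν : Module.Dual k H) :
    ∑ p : I, ν (B p) • B.coord p = ν := by
  refine LinearMap.ext fun b => ?_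
  simp only [LinearMap.sum_apply, LinearMap.smul_apply, Module.Basis.coord_apply, smul_eq_mul]
  have h := congrArg ν (B.sum_repr b)
  rw [map_sum] at h
  simp only [map_smul, smul_eq_mul] at h
  rw [← h]
  exact Finset.sum_congr rfl fun p _ => mul_comm _ _

lemma keyA (a : H) :
    ∑ i : I, (B i * a) ⊗ₜ[k] (B.coord i)
      = ∑ i : I, (B i) ⊗ₜ[k] (rActL k H a (B.coord i)) := by
  have h1 : ∀ m : I, ∑ i : I, (B.repr (B i * a) m) • B.coord i = rActL k H a (B.coord m) := by
    intro m
    refine LinearMap.ext fun b => ?_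
    simp only [LinearMap.sum_apply, LinearMap.smul_apply, Module.Basis.coord_apply, smul_eq_mul,
      rActL, LinearMap.mk₂_apply, LinearMap.coe_comp, Function.comp_apply,
      LinearMap.mulRight_apply]
    have h := congrArg (fun x => B.repr (x * a) m) (B.sum_repr b)
    simp only [Finset.sum_mul, smul_mul_assoc, map_sum, map_smul, smul_eq_mul,
      Finsupp.finset_sum_apply, Finsupp.smul_apply] at h
    rw [← h]
    refine Finset.sum_congr rfl fun i _ => mul_comm _ _
  calc ∑ i : I, (B i * a) ⊗ₜ[k] (B.coord i)
      = ∑ i : I, ∑ m : I, (B.repr (B i * a) m • B m) ⊗ₜ[k] (B.coord i) := by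
        refine Finset.sum_congr rfl fun i _ => ?_
        conv_lhs => rw [← B.sum_repr (B i * a)]
        rw [sum_tmul]
    _ = ∑ m : I, ∑ i : I, B m ⊗ₜ[k] ((B.repr (B i * a) m) • B.coord i) := by
        rw [Finset.sum_comm]
        exact Finset.sum_congr rfl fun m _ => Finset.sum_congr rfl fun i _ => smul_tmul _ _ _
    _ = ∑ m : I, B m ⊗ₜ[k] (rActL k H a (B.coord m)) := by
        refine Finset.sum_congr rfl fun m _ => ?_
        rw [← tmul_sum, h1]

lemma tensor_reconstruct (x : H ⊗[k] H) :
    ∑ j : I, ∑ l : I,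
        (LinearMap.mul' k k (TensorProduct.map (B.coord j) (B.coord l) x)) • ((B j) ⊗ₜ[k] (B l))
      = x := by
  induction x using TensorProduct.induction_on with
  | zero => simp
  | tmul a b =>
      simp only [map_tmul, LinearMap.mul'_apply, Module.Basis.coord_apply]
      conv_rhs => rw [← B.sum_repr a, sum_tmul]
      refine Finset.sum_congr rfl fun j _ => ?_
      conv_rhs => rw [← B.sum_repr b, tmul_sum]
      refine Finset.sum_congr rfl fun l _ => ?_
      rw [mul_smul, ← tmul_smul, smul_tmul']
  | add u v hu hv =>
      simp only [map_add, add_smul, Finset.sum_add_distrib, hu, hv]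

lemma keyB :
    ∑ j : I, ∑ l : I, ((B j) ⊗ₜ[k] (B l)) ⊗ₜ[k] (convL k H (B.coord j) (B.coord l))
      = ∑ p : I, (Coalgebra.comul (R := k) (B p)) ⊗ₜ[k] (B.coord p) := by
  have h1 : ∀ j l : I, convL k H (B.coord j) (B.coord l)
      = ∑ p : I, (LinearMap.mul' k k
          (TensorProduct.map (B.coord j) (B.coord l) (Coalgebra.comul (B p)))) • B.coord p := by
    intro j l
    conv_lhs => rw [← dual_expand B (convL k H (B.coord j) (B.coord l))]
    refine Finset.sum_congr rfl fun p _ => ?_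
    congr 1
  calc ∑ j : I, ∑ l : I, ((B j) ⊗ₜ[k] (B l)) ⊗ₜ[k] (convL k H (B.coord j) (B.coord l))
      = ∑ j : I, ∑ l : I, ∑ p : I,
          ((LinearMap.mul' k k (TensorProduct.map (B.coord j) (B.coord l)
              (Coalgebra.comul (B p)))) • ((B j) ⊗ₜ[k] (B l))) ⊗ₜ[k] (B.coord p) := by
        refine Finset.sum_congr rfl fun j _ => Finset.sum_congr rfl fun l _ => ?_
        rw [h1, tmul_sum]
        refine Finset.sum_congr rfl fun p _ => ?_
        rw [tmul_smul, smul_tmul']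
    _ = ∑ p : I, (∑ j : I, ∑ l : I,
          (LinearMap.mul' k k (TensorProduct.map (B.coord j) (B.coord l)
              (Coalgebra.comul (B p)))) • ((B j) ⊗ₜ[k] (B l))) ⊗ₜ[k] (B.coord p) := by
        rw [show (∑ j : I, ∑ l : I, ∑ p : I,
            ((LinearMap.mul' k k (TensorProduct.map (B.coord j) (B.coord l)
              (Coalgebra.comul (B p)))) • ((B j) ⊗ₜ[k] (B l))) ⊗ₜ[k] (B.coord p))
            = ∑ p : I, ∑ j : I, ∑ l : I,
            ((LinearMap.mul' k k (TensorProduct.map (B.coord j) (B.coord l)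
              (Coalgebra.comul (B p)))) • ((B j) ⊗ₜ[k] (B l))) ⊗ₜ[k] (B.coord p) from ?_]
        · refine Finset.sum_congr rfl fun p _ => ?_
          rw [sum_tmul]
          exact Finset.sum_congr rfl fun j _ => (sum_tmul _ _ _).symm
        · exact sum3_rotate _
    _ = ∑ p : I, (Coalgebra.comul (R := k) (B p)) ⊗ₜ[k] (B.coord p) := by
        refine Finset.sum_congr rfl fun p _ => ?_
        rw [tensor_reconstruct]


lemma hmul3_tmul (x x' y y' z z' : HD k H) :
    hmul3 k H (x ⊗ₜ (y ⊗ₜ z)) (x' ⊗ₜ (y' ⊗ₜ z'))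
      = hmul k H x x' ⊗ₜ (hmul k H y y' ⊗ₜ hmul k H z z') := by
  simp only [hmul3, hmul3T, hmul2T, hmul, LinearMap.coe_comp, Function.comp_apply,
    LinearEquiv.coe_coe, tensorTensorTensorComm_tmul, map_tmul]

lemma hmul3_sum_sum {α β : Type*} (s : Finset α) (t : Finset β)
    (x : α → HD k H ⊗[k] (HD k H ⊗[k] HD k H)) (y : β → HD k H ⊗[k] (HD k H ⊗[k] HD k H)) :
    hmul3 k H (∑ i ∈ s, x i) (∑ j ∈ t, y j)
      = ∑ i ∈ s, ∑ j ∈ t, hmul3 k H (x i) (y j) := by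
  simp only [hmul3, sum_tmul, tmul_sum, map_sum]
  exact Finset.sum_comm

lemma stepA (a y : H) (w : HD k H) :
    ∑ i : I, ((Coalgebra.counit : Module.Dual k H) ⊗ₜ[k] (B i * a)) ⊗ₜ[k]
        (((B.coord i) ⊗ₜ[k] y) ⊗ₜ[k] w)
      = ∑ i : I, ((Coalgebra.counit : Module.Dual k H) ⊗ₜ[k] (B i)) ⊗ₜ[k]
          (((rActL k H a (B.coord i)) ⊗ₜ[k] y) ⊗ₜ[k] w) := by
  have h := congrArg (TensorProduct.map
      ((TensorProduct.mk k (Module.Dual k H) H) (Coalgebra.counit : Module.Dual k H))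
      (((TensorProduct.mk k (HD k H) (HD k H)).flip w) ∘ₗ
        ((TensorProduct.mk k (Module.Dual k H) H).flip y))) (keyA B a)
  simpa only [map_sum, map_tmul, LinearMap.coe_comp, Function.comp_apply,
    TensorProduct.mk_apply, LinearMap.flip_apply] using h

lemma stepB (μ : Module.Dual k H) :
    ∑ j : I, ∑ l : I, (((rActL k H (B j) μ) ⊗ₜ[k] (B l)) ⊗ₜ[k]
        ((convL k H (B.coord j) (B.coord l)) ⊗ₜ[k] (1 : H)))
      = ∑ l : I, ((TensorProduct.map ((rActL k H).flip μ) LinearMap.id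
          (Coalgebra.comul (B l))) ⊗ₜ[k] ((B.coord l) ⊗ₜ[k] (1 : H))) := by
  have h := congrArg (TensorProduct.map
      (TensorProduct.map ((rActL k H).flip μ) (LinearMap.id : H →ₗ[k] H))
      ((TensorProduct.mk k (Module.Dual k H) H).flip (1 : H))) (keyB B)
  simpa only [map_sum, map_tmul, TensorProduct.mk_apply, LinearMap.flip_apply,
    LinearMap.id_coe, id_eq] using h


lemma hmul3_sum_left {α : Type*} (s : Finset α)
    (x : α → HD k H ⊗[k] (HD k H ⊗[k] HD k H)) (y : HD k H ⊗[k] (HD k H ⊗[k] HD k H)) :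
    hmul3 k H (∑ i ∈ s, x i) y = ∑ i ∈ s, hmul3 k H (x i) y := by
  simp only [hmul3, sum_tmul, map_sum]

lemma hmul3_sum_right {α : Type*} (s : Finset α)
    (x : HD k H ⊗[k] (HD k H ⊗[k] HD k H)) (y : α → HD k H ⊗[k] (HD k H ⊗[k] HD k H)) :
    hmul3 k H x (∑ i ∈ s, y i) = ∑ i ∈ s, hmul3 k H x (y i) := by
  simp only [hmul3, tmul_sum, map_sum]

end

/-- the canonical element `W = Σ_i (ε # e_i) ⊗ (e^i # 1)` of the
Heisenberg double `H(H*)` of a finite-dimensional Hopf algebra satisfies the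
pentagon equation `W₁₂ W₁₃ W₂₃ = W₂₃ W₁₂`. -/
theorem stmt_9 {k H : Type*} [Field k] [Ring H] [HopfAlgebra k H]
    {I : Type*} [Fintype I] (B : Module.Basis I k H) :
    hmul3 k H
      (hmul3 k H (leg12 k H (canW k H B)) (leg13 k H (canW k H B)))
      (leg23 k H (canW k H B))
    = hmul3 k H (leg23 k H (canW k H B)) (leg12 k H (canW k H B)) := by
  classical
  have hW12 : leg12 k H (canW k H B)
      = ∑ i : I, ((Coalgebra.counit : Module.Dual k H) ⊗ₜ[k] B i) ⊗ₜ[k]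
          (((B.coord i) ⊗ₜ[k] (1 : H)) ⊗ₜ[k] hone k H) := by
    simp only [canW, leg12, map_sum, map_tmul, LinearMap.id_coe, id_eq,
      LinearMap.flip_apply, TensorProduct.mk_apply]
  have hW13 : leg13 k H (canW k H B)
      = ∑ i : I, ((Coalgebra.counit : Module.Dual k H) ⊗ₜ[k] B i) ⊗ₜ[k]
          ((hone k H) ⊗ₜ[k] ((B.coord i) ⊗ₜ[k] (1 : H))) := by
    simp only [canW, leg13, map_sum, map_tmul, LinearMap.id_coe, id_eq,
      TensorProduct.mk_apply]
  have hW23 : leg23 k H (canW k H B)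
      = ∑ i : I, (hone k H) ⊗ₜ[k]
          (((Coalgebra.counit : Module.Dual k H) ⊗ₜ[k] B i) ⊗ₜ[k]
            ((B.coord i) ⊗ₜ[k] (1 : H))) := by
    simp only [canW, leg23, map_sum, TensorProduct.mk_apply]
  have e1 : hmul3 k H (leg12 k H (canW k H B)) (leg13 k H (canW k H B))
      = ∑ i : I, ∑ j : I, ((Coalgebra.counit : Module.Dual k H) ⊗ₜ[k] (B i * B j)) ⊗ₜ[k]
          (((B.coord i) ⊗ₜ[k] (1 : H)) ⊗ₜ[k] ((B.coord j) ⊗ₜ[k] (1 : H))) := by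
    rw [hW12, hW13]
    simp only [hmul3_sum_left, hmul3_sum_right]
    rw [Finset.sum_comm]
    refine Finset.sum_congr rfl fun i _ => Finset.sum_congr rfl fun j _ => ?_
    simp only [hone]
    rw [hmul3_tmul, hmul_counit_counit, hmul_one_left, hmul_one_left,
      convL_counit_right, convL_counit_left]
  have e2 : hmul3 k H (hmul3 k H (leg12 k H (canW k H B)) (leg13 k H (canW k H B)))
        (leg23 k H (canW k H B))
      = ∑ i : I, ∑ j : I, ∑ l : I,
          ((Coalgebra.counit : Module.Dual k H) ⊗ₜ[k] (B i * B j)) ⊗ₜ[k]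
            (((B.coord i) ⊗ₜ[k] (B l)) ⊗ₜ[k]
              ((convL k H (B.coord j) (B.coord l)) ⊗ₜ[k] (1 : H))) := by
    rw [e1, hW23]
    simp only [hmul3_sum_left, hmul3_sum_right]
    rw [← sum3_rotate]
    refine Finset.sum_congr rfl fun i _ => Finset.sum_congr rfl fun j _ =>
      Finset.sum_congr rfl fun l _ => ?_
    simp only [hone]
    rw [hmul3_tmul, hmul_counit_counit, mul_one, hmul_one_left, hmul_one_left,
      convL_counit_right]
  have e3 : hmul3 k H (leg23 k H (canW k H B)) (leg12 k H (canW k H B))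
      = ∑ l : I, ∑ i : I,
          ((Coalgebra.counit : Module.Dual k H) ⊗ₜ[k] (B i)) ⊗ₜ[k]
            ((TensorProduct.map ((rActL k H).flip (B.coord i)) LinearMap.id
                (Coalgebra.comul (B l))) ⊗ₜ[k] ((B.coord l) ⊗ₜ[k] (1 : H))) := by
    rw [hW23, hW12]
    simp only [hmul3_sum_left, hmul3_sum_right]
    rw [Finset.sum_comm]
    refine Finset.sum_congr rfl fun l _ => Finset.sum_congr rfl fun i _ => ?_
    simp only [hone]
    rw [hmul3_tmul, hmul_counit_counit, one_mul, hmul_counit_one, hmul_one_left,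
      convL_counit_right]
  rw [e2, e3]
  calc ∑ i : I, ∑ j : I, ∑ l : I,
          ((Coalgebra.counit : Module.Dual k H) ⊗ₜ[k] (B i * B j)) ⊗ₜ[k]
            (((B.coord i) ⊗ₜ[k] (B l)) ⊗ₜ[k]
              ((convL k H (B.coord j) (B.coord l)) ⊗ₜ[k] (1 : H)))
      = ∑ l : I, ∑ i : I, ∑ j : I,
          ((Coalgebra.counit : Module.Dual k H) ⊗ₜ[k] (B i * B j)) ⊗ₜ[k]
            (((B.coord i) ⊗ₜ[k] (B l)) ⊗ₜ[k]
              ((convL k H (B.coord j) (B.coord l)) ⊗ₜ[k] (1 : H))) := sum3_rotate _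
    _ = ∑ j : I, ∑ l : I, ∑ i : I,
          ((Coalgebra.counit : Module.Dual k H) ⊗ₜ[k] (B i * B j)) ⊗ₜ[k]
            (((B.coord i) ⊗ₜ[k] (B l)) ⊗ₜ[k]
              ((convL k H (B.coord j) (B.coord l)) ⊗ₜ[k] (1 : H))) := sum3_rotate _
    _ = ∑ j : I, ∑ l : I, ∑ i : I,
          ((Coalgebra.counit : Module.Dual k H) ⊗ₜ[k] (B i)) ⊗ₜ[k]
            (((rActL k H (B j) (B.coord i)) ⊗ₜ[k] (B l)) ⊗ₜ[k]
              ((convL k H (B.coord j) (B.coord l)) ⊗ₜ[k] (1 : H))) := by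
        exact Finset.sum_congr rfl fun j _ => Finset.sum_congr rfl fun l _ =>
          stepA B (B j) (B l) _
    _ = ∑ i : I, ∑ j : I, ∑ l : I,
          ((Coalgebra.counit : Module.Dual k H) ⊗ₜ[k] (B i)) ⊗ₜ[k]
            (((rActL k H (B j) (B.coord i)) ⊗ₜ[k] (B l)) ⊗ₜ[k]
              ((convL k H (B.coord j) (B.coord l)) ⊗ₜ[k] (1 : H))) := sum3_rotate _
    _ = ∑ i : I, ((Coalgebra.counit : Module.Dual k H) ⊗ₜ[k] (B i)) ⊗ₜ[k]
          (∑ j : I, ∑ l : I,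
            (((rActL k H (B j) (B.coord i)) ⊗ₜ[k] (B l)) ⊗ₜ[k]
              ((convL k H (B.coord j) (B.coord l)) ⊗ₜ[k] (1 : H)))) := by
        refine Finset.sum_congr rfl fun i _ => ?_
        rw [tmul_sum]
        exact Finset.sum_congr rfl fun j _ => (tmul_sum _ _ _).symm
    _ = ∑ i : I, ((Coalgebra.counit : Module.Dual k H) ⊗ₜ[k] (B i)) ⊗ₜ[k]
          (∑ l : I, ((TensorProduct.map ((rActL k H).flip (B.coord i)) LinearMap.id
              (Coalgebra.comul (B l))) ⊗ₜ[k] ((B.coord l) ⊗ₜ[k] (1 : H)))) := by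
        exact Finset.sum_congr rfl fun i _ => by rw [stepB B (B.coord i)]
    _ = ∑ i : I, ∑ l : I,
          ((Coalgebra.counit : Module.Dual k H) ⊗ₜ[k] (B i)) ⊗ₜ[k]
            ((TensorProduct.map ((rActL k H).flip (B.coord i)) LinearMap.id
                (Coalgebra.comul (B l))) ⊗ₜ[k] ((B.coord l) ⊗ₜ[k] (1 : H))) := by
        exact Finset.sum_congr rfl fun i _ => tmul_sum _ _ _
    _ = ∑ l : I, ∑ i : I,
          ((Coalgebra.counit : Module.Dual k H) ⊗ₜ[k] (B i)) ⊗ₜ[k]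
            ((TensorProduct.map ((rActL k H).flip (B.coord i)) LinearMap.id
                (Coalgebra.comul (B l))) ⊗ₜ[k] ((B.coord l) ⊗ₜ[k] (1 : H))) :=
        Finset.sum_comm
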